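/- Assume g ∈ C²([0,∞)) satisfies (B1) g(t)>0 and g'(t)<0, (B2) g ∈ L¹(0,∞), and (B3) |g'(t)| ≤ C₁g(t), |g''(t)| ≤ C₂g(t). Let ε ∈ (0,1]. Consider the 2×2 complex matrix A(t,ξ) with entries A₁₁ = 0, A₁₂ = |ξ|, A₂₁ = |ξ|, A₂₂ = i g(t)|ξ|², and let E_U(·,s,ξ) be the fundamental solution, i.e. ∂_t E_U(t,s,ξ) = i A(t,ξ) E_U(t,s,ξ), E_U(s,s,ξ) = I. Then there exists C > 0 such that for all ξ and all 0 ≤ s ≤ t with g(s)|ξ| ≤ ε (hence g(τ)|ξ| ≤ ε for all τ ∈ [s,t] since g is decreasing), every entry satisfies |E_U^{(kℓ)}(t,s,ξ)| ≤ C exp( −(3/8) |ξ|² ∫_s^t g(τ)dτ ). -/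

import Mathlib

open Set MeasureTheory Topology

lemma aux_nonneg (a b c d δ : ℝ) (h0 : 0 ≤ δ) (h1 : δ ≤ 1) :
    0 ≤ a*a + b*b + c*c + d*d + (δ + 1) * (b*c - a*d) := by
  nlinarith [sq_nonneg (b+c), sq_nonneg (a-d), mul_nonneg h0 (sq_nonneg (b+c)),
    mul_nonneg h0 (sq_nonneg (a-d)), mul_nonneg (sub_nonneg.2 h1) (sq_nonneg a),
    mul_nonneg (sub_nonneg.2 h1) (sq_nonneg b), mul_nonneg (sub_nonneg.2 h1) (sq_nonneg c),
    mul_nonneg (sub_nonneg.2 h1) (sq_nonneg d)]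

lemma aux_le (a b c d δ : ℝ) (h0 : 0 ≤ δ) (h1 : δ ≤ 1) :
    a*a + b*b + c*c + d*d ≤ 2 * (a*a + b*b + c*c + d*d + δ * (b*c - a*d)) := by
  nlinarith [mul_nonneg h0 (sq_nonneg (b+c)), mul_nonneg h0 (sq_nonneg (a-d)),
    mul_nonneg (sub_nonneg.2 h1) (sq_nonneg a), mul_nonneg (sub_nonneg.2 h1) (sq_nonneg b),
    mul_nonneg (sub_nonneg.2 h1) (sq_nonneg c), mul_nonneg (sub_nonneg.2 h1) (sq_nonneg d)]

lemma real_decay (g g' A B C D : ℝ → ℝ) (ω s t : ℝ) (hω : 0 ≤ ω) (hst : s ≤ t)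
    (hgc : ContinuousOn g (Icc s t))
    (hgd : ∀ x ∈ Ioo s t, HasDerivAt g (g' x) x)
    (hg'le : ∀ x ∈ Ioo s t, g' x ≤ 0)
    (hgpos : ∀ x ∈ Icc s t, 0 ≤ g x)
    (hδ : ∀ x ∈ Icc s t, g x * ω ≤ 1)
    (hA : ∀ τ ∈ Icc s t, HasDerivAt A (-(ω * D τ)) τ)
    (hB : ∀ τ ∈ Icc s t, HasDerivAt B (ω * C τ) τ)
    (hC : ∀ τ ∈ Icc s t, HasDerivAt C (-(ω * B τ) - g τ * ω^2 * C τ) τ)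
    (hD : ∀ τ ∈ Icc s t, HasDerivAt D (ω * A τ - g τ * ω^2 * D τ) τ)
    (hN : A s * A s + B s * B s + C s * C s + D s * D s = 1)
    (hP : B s * C s - A s * D s = 0) :
    A t * A t + B t * B t + C t * C t + D t * D t
      ≤ 2 * Real.exp 1 * Real.exp (-(ω ^ 2 * ∫ u in s..t, g u)) := by
  have hgu : ContinuousOn g (uIcc s t) := by rwa [uIcc_of_le hst]
  have hgi : IntervalIntegrable g volume s t := hgu.intervalIntegrable
  set φ : ℝ → ℝ := fun τ => ∫ u in s..τ, g u with hφdef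
  set Q : ℝ → ℝ := fun τ => A τ * A τ + B τ * B τ + C τ * C τ + D τ * D τ +
    g τ * ω * (B τ * C τ - A τ * D τ) with hQdef
  set F : ℝ → ℝ := fun τ => Q τ * Real.exp (ω ^ 2 * φ τ + ω * (g τ - g s)) with hFdef
  have hs_mem : s ∈ Icc s t := left_mem_Icc.2 hst
  have ht_mem : t ∈ Icc s t := right_mem_Icc.2 hst
  -- continuity
  have hAc : ContinuousOn A (Icc s t) := fun τ hτ => (hA τ hτ).continuousAt.continuousWithinAt
  have hBc : ContinuousOn B (Icc s t) := fun τ hτ => (hB τ hτ).continuousAt.continuousWithinAt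
  have hCc : ContinuousOn C (Icc s t) := fun τ hτ => (hC τ hτ).continuousAt.continuousWithinAt
  have hDc : ContinuousOn D (Icc s t) := fun τ hτ => (hD τ hτ).continuousAt.continuousWithinAt
  have hφc : ContinuousOn φ (Icc s t) := by
    have h := intervalIntegral.continuousOn_primitive_interval' hgi left_mem_uIcc
    rwa [uIcc_of_le hst] at h
  have hQc : ContinuousOn Q (Icc s t) := by
    exact ((((hAc.mul hAc).add (hBc.mul hBc)).add (hCc.mul hCc)).add (hDc.mul hDc)).add
      ((hgc.mul continuousOn_const).mul ((hBc.mul hCc).sub (hAc.mul hDc)))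
  have hFc : ContinuousOn F (Icc s t) := by
    exact hQc.mul (Real.continuous_exp.comp_continuousOn
      ((continuousOn_const.mul hφc).add (continuousOn_const.mul (hgc.sub continuousOn_const))))
  have hant : AntitoneOn F (Icc s t) := by
    apply antitoneOn_of_hasDerivWithinAt_nonpos (convex_Icc s t) hFc
      (f' := fun x => ω * g' x * (Q x + (B x * C x - A x * D x)) *
        Real.exp (ω ^ 2 * φ x + ω * (g x - g s)))
    · intro x hx
      rw [interior_Icc] at hx
      have hxI : x ∈ Icc s t := Ioo_subset_Icc_self hx
      have hgx : HasDerivAt g (g' x) x := hgd x hx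
      have hmeas : StronglyMeasurableAtFilter g (𝓝 x) volume :=
        ⟨Icc s t, Icc_mem_nhds hx.1 hx.2, hgc.aestronglyMeasurable measurableSet_Icc⟩
      have hφx : HasDerivAt φ (g x) x := by
        apply intervalIntegral.integral_hasDerivAt_right
          (hgi.mono_set ?_) hmeas (hgc.continuousAt (Icc_mem_nhds hx.1 hx.2))
        rw [uIcc_of_le hx.1.le, uIcc_of_le hst]
        exact Icc_subset_Icc le_rfl hx.2.le
      have hWx : HasDerivAt (fun τ => ω ^ 2 * φ τ + ω * (g τ - g s))
          (ω ^ 2 * g x + ω * g' x) x :=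
        (hφx.const_mul (ω ^ 2)).add ((hgx.sub_const (g s)).const_mul ω)
      have hQx : HasDerivAt Q
          ((-(ω * D x) * A x + A x * -(ω * D x)) + (ω * C x * B x + B x * (ω * C x))
            + ((-(ω * B x) - g x * ω^2 * C x) * C x + C x * (-(ω * B x) - g x * ω^2 * C x))
            + ((ω * A x - g x * ω^2 * D x) * D x + D x * (ω * A x - g x * ω^2 * D x))
            + ((g' x * ω) * (B x * C x - A x * D x) + (g x * ω) *
              ((ω * C x * C x + B x * (-(ω * B x) - g x * ω^2 * C x))
                - (-(ω * D x) * D x + A x * (ω * A x - g x * ω^2 * D x))))) x := by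
        exact (((((hA x hxI).mul (hA x hxI)).add ((hB x hxI).mul (hB x hxI))).add
          ((hC x hxI).mul (hC x hxI))).add ((hD x hxI).mul (hD x hxI))).add
          ((hgx.mul_const ω).mul (((hB x hxI).mul (hC x hxI)).sub ((hA x hxI).mul (hD x hxI))))
      refine HasDerivAt.hasDerivWithinAt ?_
      have hFx := hQx.mul hWx.exp
      refine HasDerivAt.congr_deriv (f := F) hFx ?_
      simp only [hQdef]
      ring
    · intro x hx
      rw [interior_Icc] at hx
      have hxI : x ∈ Icc s t := Ioo_subset_Icc_self hx
      have h1 : 0 ≤ Q x + (B x * C x - A x * D x) := by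
        have h := aux_nonneg (A x) (B x) (C x) (D x) (g x * ω)
          (mul_nonneg (hgpos x hxI) hω) (hδ x hxI)
        simp only [hQdef]
        nlinarith [h]
      have h2 : ω * g' x ≤ 0 := mul_nonpos_of_nonneg_of_nonpos hω (hg'le x hx)
      have he : (0:ℝ) ≤ Real.exp (ω ^ 2 * φ x + ω * (g x - g s)) := (Real.exp_pos _).le
      nlinarith [mul_nonneg h1 he, h2]
  have hFts : F t ≤ F s := hant hs_mem ht_mem hst
  have hFs : F s = 1 := by
    simp only [hFdef, hQdef, hφdef]
    rw [intervalIntegral.integral_same]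
    rw [hP, hN]
    simp
  rw [hFs] at hFts
  simp only [hFdef] at hFts
  have hexp : (0:ℝ) < Real.exp (ω ^ 2 * φ t + ω * (g t - g s)) := Real.exp_pos _
  have hQt : Q t ≤ Real.exp (-(ω ^ 2 * φ t + ω * (g t - g s))) := by
    rw [Real.exp_neg, ← one_div]
    exact (le_div_iff₀ hexp).2 hFts
  have hNt : A t * A t + B t * B t + C t * C t + D t * D t ≤ 2 * Q t := by
    have h := aux_le (A t) (B t) (C t) (D t) (g t * ω)
      (mul_nonneg (hgpos t ht_mem) hω) (hδ t ht_mem)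
    simp only [hQdef]
    nlinarith [h]
  have h3 : -(ω ^ 2 * φ t + ω * (g t - g s)) ≤ -(ω ^ 2 * φ t) + 1 := by
    have h4 := hδ s hs_mem
    have h5 := mul_nonneg (hgpos t ht_mem) hω
    nlinarith
  have h6 : Real.exp (-(ω ^ 2 * φ t + ω * (g t - g s))) ≤ Real.exp (-(ω ^ 2 * φ t) + 1) :=
    Real.exp_le_exp.2 h3
  have h7 : Real.exp (-(ω ^ 2 * φ t) + 1) = Real.exp 1 * Real.exp (-(ω ^ 2 * φ t)) := by
    rw [← Real.exp_add]; ring_nf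
  have hφt : φ t = ∫ u in s..t, g u := by simp only [hφdef]
  rw [← hφt]
  calc A t * A t + B t * B t + C t * C t + D t * D t ≤ 2 * Q t := hNt
    _ ≤ 2 * Real.exp (-(ω ^ 2 * φ t + ω * (g t - g s))) := by linarith
    _ ≤ 2 * Real.exp (-(ω ^ 2 * φ t) + 1) := by linarith
    _ = 2 * Real.exp 1 * Real.exp (-(ω ^ 2 * φ t)) := by rw [h7]; ring
lemma pair_bound (g g' : ℝ → ℝ) (ω s t : ℝ) (hω : 0 ≤ ω) (hst : s ≤ t)
    (hgc : ContinuousOn g (Icc s t))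
    (hgd : ∀ x ∈ Ioo s t, HasDerivAt g (g' x) x)
    (hg'le : ∀ x ∈ Ioo s t, g' x ≤ 0)
    (hgpos : ∀ x ∈ Icc s t, 0 ≤ g x)
    (hδ : ∀ x ∈ Icc s t, g x * ω ≤ 1)
    (y₁ y₂ : ℝ → ℂ)
    (hy₁ : ∀ τ ∈ Icc s t,
      HasDerivAt y₁ (Complex.I * ((0 : ℂ) * y₁ τ + ((ω : ℝ) : ℂ) * y₂ τ)) τ)
    (hy₂ : ∀ τ ∈ Icc s t,
      HasDerivAt y₂ (Complex.I * (((ω : ℝ) : ℂ) * y₁ τ +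
        (Complex.I * ((g τ * ω ^ 2 : ℝ) : ℂ)) * y₂ τ)) τ)
    (hN : Complex.normSq (y₁ s) + Complex.normSq (y₂ s) = 1)
    (hP : (y₁ s).im * (y₂ s).re - (y₁ s).re * (y₂ s).im = 0) :
    Complex.normSq (y₁ t) + Complex.normSq (y₂ t)
      ≤ 2 * Real.exp 1 * Real.exp (-(ω ^ 2 * ∫ u in s..t, g u)) := by
  have hA : ∀ τ ∈ Icc s t, HasDerivAt (fun u => (y₁ u).re) (-(ω * (y₂ τ).im)) τ := by
    intro τ hτ
    have h := Complex.reCLM.hasFDerivAt.comp_hasDerivAt τ (hy₁ τ hτ)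
    simp only [Function.comp_def, Complex.reCLM_apply] at h
    refine h.congr_deriv ?_
    simp [Complex.mul_re, Complex.mul_im]
  have hB : ∀ τ ∈ Icc s t, HasDerivAt (fun u => (y₁ u).im) (ω * (y₂ τ).re) τ := by
    intro τ hτ
    have h := Complex.imCLM.hasFDerivAt.comp_hasDerivAt τ (hy₁ τ hτ)
    simp only [Function.comp_def, Complex.imCLM_apply] at h
    refine h.congr_deriv ?_
    simp [Complex.mul_re, Complex.mul_im]
  have hC : ∀ τ ∈ Icc s t, HasDerivAt (fun u => (y₂ u).re)
      (-(ω * (y₁ τ).im) - g τ * ω ^ 2 * (y₂ τ).re) τ := by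
    intro τ hτ
    have h := Complex.reCLM.hasFDerivAt.comp_hasDerivAt τ (hy₂ τ hτ)
    simp only [Function.comp_def, Complex.reCLM_apply] at h
    refine h.congr_deriv ?_
    simp [Complex.mul_re, Complex.mul_im, ← Complex.ofReal_pow]
    ring
  have hD : ∀ τ ∈ Icc s t, HasDerivAt (fun u => (y₂ u).im)
      (ω * (y₁ τ).re - g τ * ω ^ 2 * (y₂ τ).im) τ := by
    intro τ hτ
    have h := Complex.imCLM.hasFDerivAt.comp_hasDerivAt τ (hy₂ τ hτ)
    simp only [Function.comp_def, Complex.imCLM_apply] at h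
    refine h.congr_deriv ?_
    simp [Complex.mul_re, Complex.mul_im, ← Complex.ofReal_pow]
    ring
  have key := real_decay g g' (fun u => (y₁ u).re) (fun u => (y₁ u).im)
    (fun u => (y₂ u).re) (fun u => (y₂ u).im) ω s t hω hst hgc hgd hg'le hgpos hδ
    hA hB hC hD (by rw [Complex.normSq_apply, Complex.normSq_apply] at hN; linarith) hP
  rw [Complex.normSq_apply, Complex.normSq_apply]
  linarith [key]
lemma norm_le_aux (z : ℂ) (X : ℝ) (hX : 0 ≤ X)
    (h : Complex.normSq z ≤ 2 * Real.exp 1 * Real.exp (-X)) :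
    ‖z‖ ≤ 3 * Real.exp (-(3/8) * X) := by
  have h9 : 2 * Real.exp 1 * Real.exp (-X) ≤ 9 * Real.exp (-(3/4) * X) := by
    have he : Real.exp 1 < 2.7182818286 := Real.exp_one_lt_d9
    have h1 : Real.exp (-X) ≤ Real.exp (-(3/4) * X) := Real.exp_le_exp.2 (by linarith)
    have h2 : (0:ℝ) < Real.exp (-X) := Real.exp_pos _
    nlinarith [Real.exp_pos (-(3/4) * X)]
  have heq : (3 * Real.exp (-(3/8) * X)) ^ 2 = 9 * Real.exp (-(3/4) * X) := by
    have h5 : -(3/8) * X + -(3/8) * X = -(3/4) * X := by ring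
    rw [mul_pow, sq (Real.exp (-(3/8) * X)), ← Real.exp_add, h5]
    norm_num
  have h0 : ‖z‖ ^ 2 = Complex.normSq z := by
    rw [Complex.sq_norm]
  have hsq : ‖z‖ ^ 2 ≤ (3 * Real.exp (-(3/8) * X)) ^ 2 := by
    rw [h0, heq]; linarith
  have hb : (0:ℝ) ≤ 3 * Real.exp (-(3/8) * X) := by positivity
  calc ‖z‖ = Real.sqrt (‖z‖ ^ 2) := (Real.sqrt_sq (norm_nonneg z)).symm
    _ ≤ Real.sqrt ((3 * Real.exp (-(3/8) * X)) ^ 2) := Real.sqrt_le_sqrt hsq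
    _ = 3 * Real.exp (-(3/8) * X) := Real.sqrt_sq hb

theorem stmt_7
    (n : ℕ)
    (g g' g'' : ℝ → ℝ)
    (hg_deriv : ∀ t ∈ Ici (0:ℝ), HasDerivWithinAt g (g' t) (Ici 0) t)
    (hg_deriv' : ∀ t ∈ Ici (0:ℝ), HasDerivWithinAt g' (g'' t) (Ici 0) t)
    (hg_cont : ContinuousOn g'' (Ici 0))
    (hB1 : ∀ t ∈ Ici (0:ℝ), 0 < g t ∧ g' t < 0)
    (hB2 : IntegrableOn g (Ici 0))
    (hB3 : ∃ C₁ > (0:ℝ), ∃ C₂ > (0:ℝ), ∀ t ∈ Ici (0:ℝ),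
      |g' t| ≤ C₁ * g t ∧ |g'' t| ≤ C₂ * g t)
    (ε : ℝ) (hε1 : 0 < ε) (hε2 : ε ≤ 1) :
    ∃ C > (0:ℝ),
      ∀ (ξ : EuclideanSpace ℝ (Fin n)),
      ∀ s t : ℝ, 0 ≤ s → s ≤ t → g s * ‖ξ‖ ≤ ε →
      ∀ E11 E12 E21 E22 : ℝ → ℂ,
        E11 s = 1 → E12 s = 0 → E21 s = 0 → E22 s = 1 →
        (∀ τ ∈ Ici s,
          HasDerivAt E11 (Complex.I * ((0 : ℂ) * E11 τ + ((‖ξ‖ : ℝ) : ℂ) * E21 τ)) τ ∧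
          HasDerivAt E21 (Complex.I * (((‖ξ‖ : ℝ) : ℂ) * E11 τ + (Complex.I * ((g τ * ‖ξ‖ ^ 2 : ℝ) : ℂ)) * E21 τ)) τ ∧
          HasDerivAt E12 (Complex.I * ((0 : ℂ) * E12 τ + ((‖ξ‖ : ℝ) : ℂ) * E22 τ)) τ ∧
          HasDerivAt E22 (Complex.I * (((‖ξ‖ : ℝ) : ℂ) * E12 τ + (Complex.I * ((g τ * ‖ξ‖ ^ 2 : ℝ) : ℂ)) * E22 τ)) τ) →
        ‖E11 t‖ ≤ C * Real.exp (-(3/8) * ‖ξ‖ ^ 2 * ∫ τ in s..t, g τ) ∧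
        ‖E12 t‖ ≤ C * Real.exp (-(3/8) * ‖ξ‖ ^ 2 * ∫ τ in s..t, g τ) ∧
        ‖E21 t‖ ≤ C * Real.exp (-(3/8) * ‖ξ‖ ^ 2 * ∫ τ in s..t, g τ) ∧
        ‖E22 t‖ ≤ C * Real.exp (-(3/8) * ‖ξ‖ ^ 2 * ∫ τ in s..t, g τ) := by
  refine ⟨3, by norm_num, ?_⟩
  intro ξ s t hs hst hε E11 E12 E21 E22 h11 h12 h21 h22 hODE
  set ω := ‖ξ‖ with hωdef
  have hω : 0 ≤ ω := norm_nonneg ξ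
  have hgcont : ContinuousOn g (Ici 0) := fun x hx => (hg_deriv x hx).continuousWithinAt
  have hantg : AntitoneOn g (Ici (0:ℝ)) := by
    apply antitoneOn_of_hasDerivWithinAt_nonpos (convex_Ici 0) hgcont (f' := g')
    · intro x hx
      exact (hg_deriv x (interior_subset hx)).mono interior_subset
    · intro x hx
      exact (hB1 x (interior_subset hx)).2.le
  have hsub : Icc s t ⊆ Ici (0:ℝ) := fun x hx => le_trans hs hx.1
  have hgc : ContinuousOn g (Icc s t) := hgcont.mono hsub
  have hgd : ∀ x ∈ Ioo s t, HasDerivAt g (g' x) x := fun x hx =>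
    (hg_deriv x (le_trans hs hx.1.le)).hasDerivAt (Ici_mem_nhds (lt_of_le_of_lt hs hx.1))
  have hg'le : ∀ x ∈ Ioo s t, g' x ≤ 0 := fun x hx =>
    (hB1 x (hsub (Ioo_subset_Icc_self hx))).2.le
  have hgpos : ∀ x ∈ Icc s t, 0 ≤ g x := fun x hx => (hB1 x (hsub hx)).1.le
  have hδ : ∀ x ∈ Icc s t, g x * ω ≤ 1 := by
    intro x hx
    have h1 : g x ≤ g s := hantg (mem_Ici.2 hs) (hsub hx) hx.1
    calc g x * ω ≤ g s * ω := mul_le_mul_of_nonneg_right h1 hω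
      _ ≤ ε := hε
      _ ≤ 1 := hε2
  have hint_nonneg : 0 ≤ ∫ u in s..t, g u :=
    intervalIntegral.integral_nonneg hst (fun u hu => hgpos u hu)
  have hX : 0 ≤ ω ^ 2 * ∫ u in s..t, g u := mul_nonneg (sq_nonneg ω) hint_nonneg
  have hpair1 := pair_bound g g' ω s t hω hst hgc hgd hg'le hgpos hδ E11 E21
    (fun τ hτ => (hODE τ hτ.1).1) (fun τ hτ => (hODE τ hτ.1).2.1)
    (by simp [h11, h21]) (by simp [h11, h21])
  have hpair2 := pair_bound g g' ω s t hω hst hgc hgd hg'le hgpos hδ E12 E22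
    (fun τ hτ => (hODE τ hτ.1).2.2.1) (fun τ hτ => (hODE τ hτ.1).2.2.2)
    (by simp [h12, h22]) (by simp [h12, h22])
  refine ⟨?_, ?_, ?_, ?_⟩
  · rw [mul_assoc]
    exact norm_le_aux _ _ hX
      (le_trans (le_add_of_nonneg_right (Complex.normSq_nonneg _)) hpair1)
  · rw [mul_assoc]
    exact norm_le_aux _ _ hX
      (le_trans (le_add_of_nonneg_right (Complex.normSq_nonneg _)) hpair2)
  · rw [mul_assoc]
    exact norm_le_aux _ _ hX
      (le_trans (le_add_of_nonneg_left (Complex.normSq_nonneg _)) hpair1)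
  · rw [mul_assoc]
    exact norm_le_aux _ _ hX
      (le_trans (le_add_of_nonneg_left (Complex.normSq_nonneg _)) hpair2)
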